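/- Let K be a compact Hausdorff topological space, I a directed set, (E_i)_{i ∈ I} a directed system of Banach spaces with linear contractions ι_{ji} : E_i → E_j (i ≤ j) as connecting maps, and E a Banach space with compatible linear contractions ι_i : E_i → E such that ⋃_i ι_i(E_i) is dense in E and ‖ι_i(x)‖ = inf_{j ≥ i} ‖ι_{ji}(x)‖ for every i and every x ∈ E_i. Then: (i) for every i and all continuous maps f, g : K → E_i, sup_{p ∈ K} ‖ι_i(f(p)) − ι_i(g(p))‖ = inf_{j ≥ i} sup_{p ∈ K} ‖ι_{ji}(f(p)) − ι_{ji}(g(p))‖; and (ii) for every continuous map φ : K → E and every ε > 0 there exist i ∈ I and a continuous map ψ : K → E_i with sup_{p ∈ K} ‖φ(p) − ι_i(ψ(p))‖ ≤ ε. In other words, the functor Cont(K, −) from Banach spaces with linear contractions to complete metric spaces (with supremum distance and nonexpansive maps) preserves filtered colimits. -/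
import Mathlib

/-- For a compact Hausdorff space `K`, the functor `Cont(K, -)` from
Banach spaces with linear contractions to complete metric spaces (supremum distance)
preserves filtered colimits: (i) the canonical comparison map is isometric, and
(ii) every continuous `φ : K → E` is uniformly approximated by continuous maps into
the stages `E i`. -/
theorem stmt1
    {K : Type*} [TopologicalSpace K] [CompactSpace K] [T2Space K]
    {I : Type*} [Preorder I] [IsDirected I (· ≤ ·)] [Nonempty I]
    {E : I → Type*} [∀ i, NormedAddCommGroup (E i)] [∀ i, NormedSpace ℝ (E i)]
    [∀ i, CompleteSpace (E i)]
    {F : Type*} [NormedAddCommGroup F] [NormedSpace ℝ F] [CompleteSpace F]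
    (ι : ∀ i j, i ≤ j → (E i →L[ℝ] E j))
    (ιc : ∀ i, E i →L[ℝ] F)
    (hι1 : ∀ i j (h : i ≤ j) (x : E i), ‖ι i j h x‖ ≤ ‖x‖)
    (hιc1 : ∀ i (x : E i), ‖ιc i x‖ ≤ ‖x‖)
    (hcomp : ∀ i j (h : i ≤ j) (x : E i), ιc j (ι i j h x) = ιc i x)
    (htrans : ∀ i j k (hij : i ≤ j) (hjk : j ≤ k) (x : E i),
      ι j k hjk (ι i j hij x) = ι i k (hij.trans hjk) x)
    (hid : ∀ i (x : E i), ι i i le_rfl x = x)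
    (hdense : Dense (⋃ i, Set.range (ιc i)))
    (hnorm : ∀ i (x : E i), ‖ιc i x‖ = ⨅ j : {j // i ≤ j}, ‖ι i j.1 j.2 x‖) :
    (∀ i (f g : K → E i), Continuous f → Continuous g →
      (⨆ p : K, ‖ιc i (f p) - ιc i (g p)‖)
        = ⨅ j : {j // i ≤ j}, ⨆ p : K, ‖ι i j.1 j.2 (f p) - ι i j.1 j.2 (g p)‖)
    ∧
    (∀ (φ : K → F), Continuous φ → ∀ ε > 0,
      ∃ (i : I) (ψ : K → E i), Continuous ψ ∧ (⨆ p : K, ‖φ p - ιc i (ψ p)‖) ≤ ε) := by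
  classical
  constructor
  · -- Part (i)
    intro i f g hf hg
    simp only [← map_sub]
    set h : K → E i := fun p => f p - g p with hh
    have hhc : Continuous h := hf.sub hg
    have hbdd : ∀ (v : K → ℝ), Continuous v → BddAbove (Set.range v) :=
      fun v hv => (isCompact_range hv).bddAbove
    rcases isEmpty_or_nonempty K with hK | hK
    · simp [Real.iSup_of_isEmpty, ciInf_const]
    · refine le_antisymm ?_ ?_
      · refine le_ciInf fun j => ?_
        refine ciSup_le fun p => ?_
        calc ‖ιc i (h p)‖ = ⨅ j' : {j // i ≤ j}, ‖ι i j'.1 j'.2 (h p)‖ := hnorm i (h p)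
          _ ≤ ‖ι i j.1 j.2 (h p)‖ :=
              ciInf_le ⟨0, fun x ⟨j', hj'⟩ => hj' ▸ norm_nonneg _⟩ j
          _ ≤ ⨆ p : K, ‖ι i j.1 j.2 (h p)‖ :=
              le_ciSup (hbdd _ (((ι i j.1 j.2).continuous.comp hhc).norm)) p
      · set M : ℝ := ⨆ p : K, ‖ιc i (h p)‖ with hM
        refine le_of_forall_pos_le_add fun ε hε => ?_
        have hMb : ∀ p : K, ‖ιc i (h p)‖ ≤ M :=
          fun p => le_ciSup (hbdd _ (((ιc i).continuous.comp hhc).norm)) p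
        have hex : ∀ p : K, ∃ j : {j // i ≤ j}, ‖ι i j.1 j.2 (h p)‖ < M + ε / 2 := by
          intro p
          apply exists_lt_of_ciInf_lt
          rw [← hnorm i (h p)]
          linarith [hMb p]
        choose j hj using hex
        set U : K → Set K := fun p => {q | ‖ι i (j p).1 (j p).2 (h q)‖ < M + ε / 2} with hU
        have hUopen : ∀ p, IsOpen (U p) := by
          intro p
          exact isOpen_lt (((ι i (j p).1 (j p).2).continuous.comp hhc).norm) continuous_const
        have hcov : Set.univ ⊆ ⋃ p, U p := fun q _ => Set.mem_iUnion.2 ⟨q, hj q⟩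
        obtain ⟨t, ht⟩ := isCompact_univ.elim_finite_subcover U hUopen hcov
        obtain ⟨j0, hj0⟩ := Finset.exists_le (insert i (t.image fun p => (j p).1))
        have hij0 : i ≤ j0 := hj0 i (Finset.mem_insert_self _ _)
        have hjp0 : ∀ p ∈ t, (j p).1 ≤ j0 := fun p hp =>
          hj0 _ (Finset.mem_insert_of_mem (Finset.mem_image_of_mem _ hp))
        calc (⨅ j : {j // i ≤ j}, ⨆ p : K, ‖ι i j.1 j.2 (h p)‖)
            ≤ ⨆ q : K, ‖ι i j0 hij0 (h q)‖ := by
              refine ciInf_le ?_ (⟨j0, hij0⟩ : {j // i ≤ j})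
              refine ⟨0, ?_⟩
              rintro x ⟨j', rfl⟩
              rcases isEmpty_or_nonempty K with hK' | hK'
              · simp [Real.iSup_of_isEmpty]
              · exact le_ciSup_of_le (hbdd _ (((ι i j'.1 j'.2).continuous.comp hhc).norm))
                  (Classical.arbitrary K) (norm_nonneg _)
          _ ≤ M + ε := by
              refine ciSup_le fun q => ?_
              obtain ⟨p, hp, hq⟩ := Set.mem_iUnion₂.1 (ht (Set.mem_univ q))
              have key : ι i j0 hij0 (h q) = ι (j p).1 j0 (hjp0 p hp) (ι i (j p).1 (j p).2 (h q)) := by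
                rw [htrans]
              calc ‖ι i j0 hij0 (h q)‖
                  = ‖ι (j p).1 j0 (hjp0 p hp) (ι i (j p).1 (j p).2 (h q))‖ := by rw [key]
                _ ≤ ‖ι i (j p).1 (j p).2 (h q)‖ := hι1 _ _ _ _
                _ ≤ M + ε := by have := hq; simp only [hU, Set.mem_setOf_eq] at this; linarith
  · -- Part (ii)
    intro φ hφ ε hε
    rcases isEmpty_or_nonempty K with hK | hK
    · refine ⟨Classical.arbitrary I, fun _ => 0, continuous_const, ?_⟩
      simp [Real.iSup_of_isEmpty]
      linarith
    · have hex : ∀ q : K, ∃ (iq : I) (x : E iq), ‖φ q - ιc iq x‖ < ε / 4 := by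
        intro q
        obtain ⟨b, hb, hdist⟩ := Metric.mem_closure_iff.1 (hdense (φ q)) (ε / 4) (by linarith)
        obtain ⟨s, ⟨iq, rfl⟩, x, rfl⟩ := hb
        exact ⟨iq, x, by rwa [← dist_eq_norm]⟩
      choose iq xq hxq using hex
      set U : K → Set K := fun q => {p | ‖φ p - φ q‖ < ε / 4} with hU
      have hUopen : ∀ q, IsOpen (U q) := fun q =>
        isOpen_lt ((hφ.sub continuous_const).norm) continuous_const
      have hcov : Set.univ ⊆ ⋃ q, U q := fun q _ => Set.mem_iUnion.2 ⟨q, by simp [hU]; linarith⟩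
      obtain ⟨t, ht⟩ := isCompact_univ.elim_finite_subcover U hUopen hcov
      obtain ⟨i0, hi0⟩ := Finset.exists_le (t.image iq)
      have hle : ∀ q ∈ t, iq q ≤ i0 := fun q hq => hi0 _ (Finset.mem_image_of_mem _ hq)
      -- y q for q : t
      set y : {q // q ∈ t} → E i0 := fun q => ι (iq q.1) i0 (hle q.1 q.2) (xq q.1) with hy
      have hyc : ∀ q : {q // q ∈ t}, ιc i0 (y q) = ιc (iq q.1) (xq q.1) := fun q => hcomp _ _ _ _
      -- partition of unity
      have hcov' : (Set.univ : Set K) ⊆ ⋃ q : {q // q ∈ t}, U q.1 := by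
        intro p hp
        obtain ⟨q, hq, hpq⟩ := Set.mem_iUnion₂.1 (ht hp)
        exact Set.mem_iUnion.2 ⟨⟨q, hq⟩, hpq⟩
      obtain ⟨u, hu⟩ := PartitionOfUnity.exists_isSubordinate isClosed_univ
        (fun q : {q // q ∈ t} => U q.1) (fun q => hUopen q.1) hcov'
      set ψ : K → E i0 := fun p => ∑ q : {q // q ∈ t}, u q p • y q with hψ
      have hψc : Continuous ψ := by
        apply continuous_finset_sum
        intro q _
        exact (u q).continuous.smul continuous_const
      refine ⟨i0, ψ, hψc, ?_⟩
      have hsum1 : ∀ p : K, ∑ q : {q // q ∈ t}, u q p = 1 := by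
        intro p
        have := u.sum_eq_one (Set.mem_univ p)
        rwa [finsum_eq_sum_of_fintype] at this
      refine ciSup_le fun p => ?_
      have hdiff : φ p - ιc i0 (ψ p) = ∑ q : {q // q ∈ t}, u q p • (φ p - ιc i0 (y q)) := by
        have h1 : ιc i0 (ψ p) = ∑ q : {q // q ∈ t}, u q p • ιc i0 (y q) := by
          rw [hψ]; simp [map_sum, map_smul]
        have h2 : φ p = ∑ q : {q // q ∈ t}, u q p • φ p := by
          rw [← Finset.sum_smul, hsum1 p, one_smul]
        rw [h1]
        conv_lhs => rw [h2]
        rw [← Finset.sum_sub_distrib]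
        exact Finset.sum_congr rfl fun q _ => (smul_sub _ _ _).symm
      rw [hdiff]
      calc ‖∑ q : {q // q ∈ t}, u q p • (φ p - ιc i0 (y q))‖
          ≤ ∑ q : {q // q ∈ t}, ‖u q p • (φ p - ιc i0 (y q))‖ := norm_sum_le _ _
        _ ≤ ∑ q : {q // q ∈ t}, u q p * (ε / 2) := by
            refine Finset.sum_le_sum fun q _ => ?_
            rw [norm_smul, Real.norm_of_nonneg (u.nonneg q p)]
            rcases eq_or_ne (u q p) 0 with h0 | h0
            · simp [h0]
            · refine mul_le_mul_of_nonneg_left ?_ (u.nonneg q p)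
              have hpU : p ∈ U q.1 := hu q (subset_tsupport _ (by simpa using h0))
              have h1 : ‖φ p - φ q.1‖ < ε / 4 := hpU
              have h2 : ‖φ q.1 - ιc i0 (y q)‖ < ε / 4 := by rw [hyc q]; exact hxq q.1
              calc ‖φ p - ιc i0 (y q)‖
                  ≤ ‖φ p - φ q.1‖ + ‖φ q.1 - ιc i0 (y q)‖ := norm_sub_le_norm_sub_add_norm_sub _ _ _
                _ ≤ ε / 2 := by linarith
        _ = (∑ q : {q // q ∈ t}, u q p) * (ε / 2) := (Finset.sum_mul _ _ _).symm
        _ = ε / 2 := by rw [hsum1 p, one_mul]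
        _ ≤ ε := by linarith
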